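/- Every subset X ⊆ 2^ω of cardinality continuum contains a subset X' of cardinality continuum that is 𝔠-transitive-s₀: for every perfect tree p there is a perfect subtree q ≤ p such that for every t ∈ 2^ω, |([q] + t) ∩ X'| < 𝔠. -/

import Mathlib

open Cardinal

abbrev Cantor : Type := ℕ → Bool

def cAdd (x y : Cantor) : Cantor := fun n => xor (x n) (y n)

def setAdd (X Y : Set Cantor) : Set Cantor := Set.image2 cAdd X Y

def IsTree (p : Set (List Bool)) : Prop := ∀ σ ∈ p, ∀ τ : List Bool, τ <+: σ → τ ∈ p

def Splits (p : Set (List Bool)) (σ : List Bool) : Prop :=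
  σ ++ [false] ∈ p ∧ σ ++ [true] ∈ p

def PerfTree (p : Set (List Bool)) : Prop :=
  p.Nonempty ∧ IsTree p ∧ ∀ σ ∈ p, ∃ τ ∈ p, σ <+: τ ∧ Splits p τ

def seg (x : Cantor) (n : ℕ) : List Bool := List.ofFn (fun i : Fin n => x i)

def body (p : Set (List Bool)) : Set Cantor := { x | ∀ n, seg x n ∈ p }

def shiftNode (t : Cantor) (σ : List Bool) : List Bool :=
  σ.mapIdx fun i b => xor b (t i)

def treeAdd (p : Set (List Bool)) (t : Cantor) : Set (List Bool) := shiftNode t '' p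

def SkewT (p : Set (List Bool)) : Prop :=
  ∀ σ ∈ p, ∀ τ ∈ p, Splits p σ → Splits p τ → σ.length = τ.length → σ = τ

def PerfectSet (P : Set Cantor) : Prop := Perfect P ∧ P.Nonempty

def MarczewskiNull (Y : Set Cantor) : Prop :=
  ∀ P : Set Cantor, PerfectSet P → ∃ Q, PerfectSet Q ∧ Q ⊆ P ∧ Q ∩ Y = ∅

def MarczewskiNullT (Y : Set Cantor) : Prop :=
  ∀ p, PerfTree p → ∃ q, PerfTree q ∧ q ⊆ p ∧ body q ∩ Y = ∅

def Shiftable (X : Set Cantor) : Prop :=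
  ∀ Y, MarczewskiNull Y → setAdd X Y ≠ Set.univ

noncomputable section
namespace S9
attribute [local instance] PiNat.metricSpace
open PiNat Set

def czero : Cantor := fun _ => false

@[simp] lemma cAdd_cAdd (x u : Cantor) : cAdd (cAdd x u) u = x := by
  funext n; simp [cAdd]

def Tr (u : Cantor) (A : Set Cantor) : Set Cantor := {x | cAdd x u ∈ A}

lemma mem_Tr {u : Cantor} {A : Set Cantor} {x : Cantor} : x ∈ Tr u A ↔ cAdd x u ∈ A := Iff.rfl

lemma cAdd_inj (u : Cantor) : Function.Injective (fun x => cAdd x u) := by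
  intro x y h
  have := congrArg (fun z => cAdd z u) h
  simpa using this

lemma image_cAdd_eq_Tr (u : Cantor) (A : Set Cantor) : (fun x => cAdd x u) '' A = Tr u A := by
  ext y
  constructor
  · rintro ⟨x, hx, rfl⟩
    simpa [Tr] using hx
  · intro hy
    exact ⟨cAdd y u, hy, by simp⟩

lemma cAdd_assoc (x u v : Cantor) : cAdd (cAdd x u) v = cAdd x (cAdd u v) := by
  funext n; simp [cAdd, Bool.xor_assoc]

lemma Tr_Tr (u v : Cantor) (A : Set Cantor) : Tr u (Tr v A) = Tr (cAdd u v) A := by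
  ext x; simp [Tr, cAdd_assoc]

@[simp] lemma Tr_zero (A : Set Cantor) : Tr czero A = A := by
  ext x
  have : cAdd x czero = x := by funext n; simp [cAdd, czero]
  simp [Tr, this]

lemma continuous_cAdd (u : Cantor) : Continuous (fun x => cAdd x u) := by
  apply continuous_pi
  intro n
  have : (fun x : Cantor => cAdd x u n) = (fun b : Bool => xor b (u n)) ∘ (fun x : Cantor => x n) := rfl
  rw [this]
  exact Continuous.comp (continuous_of_discreteTopology) (continuous_apply n)

lemma Tr_eq_preimage (u : Cantor) (A : Set Cantor) : Tr u A = (fun x => cAdd x u) ⁻¹' A := rfl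

lemma isClosed_Tr {A : Set Cantor} (hA : IsClosed A) (u : Cantor) : IsClosed (Tr u A) := by
  rw [Tr_eq_preimage]; exact hA.preimage (continuous_cAdd u)

lemma perfect_Tr {A : Set Cantor} (hA : Perfect A) (u : Cantor) : Perfect (Tr u A) := by
  refine ⟨isClosed_Tr hA.closed u, ?_⟩
  intro x hx
  rw [accPt_iff_nhds]
  intro U hU
  have h2 : (fun z => cAdd z u) ⁻¹' U ∈ nhds (cAdd x u) := by
    apply ContinuousAt.preimage_mem_nhds (continuous_cAdd u).continuousAt
    simpa using hU
  obtain ⟨y, ⟨hyU, hyA⟩, hyne⟩ := accPt_iff_nhds.1 (hA.acc _ hx) _ h2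
  refine ⟨cAdd y u, ⟨by simpa using hyU, by simp [Tr, hyA]⟩, ?_⟩
  intro h
  apply hyne
  have := congrArg (fun z => cAdd z u) h
  simpa using this

lemma nonempty_Tr {A : Set Cantor} (hA : A.Nonempty) (u : Cantor) : (Tr u A).Nonempty := by
  obtain ⟨x, hx⟩ := hA
  exact ⟨cAdd x u, by simp [Tr, hx]⟩

lemma countable_Tr {A : Set Cantor} (hA : A.Countable) (u : Cantor) : (Tr u A).Countable := by
  rw [← image_cAdd_eq_Tr]
  exact hA.image _

lemma mk_Tr (A : Set Cantor) (u : Cantor) : #(Tr u A) = #A := by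
  rw [← image_cAdd_eq_Tr]
  exact Cardinal.mk_image_eq (cAdd_inj u)

lemma Tr_mono {A B : Set Cantor} (h : A ⊆ B) (u : Cantor) : Tr u A ⊆ Tr u B := by
  intro x hx; exact h hx

lemma Tr_inter (u : Cantor) (A B : Set Cantor) : Tr u (A ∩ B) = Tr u A ∩ Tr u B := rfl

lemma mk_cantor : #Cantor = Cardinal.continuum := by
  have : #Cantor = (2 : Cardinal) ^ (ℵ₀ : Cardinal) := by
    rw [show ((2:Cardinal) = #Bool) by simp, show ((ℵ₀ : Cardinal) = #ℕ) by simp,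
      Cardinal.power_def]
  rw [this, Cardinal.two_power_aleph0]

lemma mk_set_lt_continuum_of_countable {S : Set Cantor} (h : S.Countable) :
    #S < Cardinal.continuum :=
  lt_of_le_of_lt h.le_aleph0 Cardinal.aleph0_lt_continuum

lemma mk_set_le_continuum (S : Set Cantor) : #S ≤ Cardinal.continuum := by
  rw [← mk_cantor]
  exact le_trans (Cardinal.mk_le_mk_of_subset (Set.subset_univ S)) (by simp)

@[simp] lemma seg_length (x : Cantor) (n : ℕ) : (seg x n).length = n := by simp [seg]

lemma seg_getElem (x : Cantor) {n i : ℕ} (h : i < (seg x n).length) : (seg x n)[i] = x i := by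
  simp [seg]

lemma seg_succ (x : Cantor) (n : ℕ) : seg x (n+1) = seg x n ++ [x n] := by
  rw [seg, List.ofFn_succ']
  simp [seg, List.concat_eq_append]

lemma seg_prefix_seg (x : Cantor) {m n : ℕ} (h : m ≤ n) : seg x m <+: seg x n := by
  induction n with
  | zero => simp at h; simp [h]
  | succ k ih =>
    rcases Nat.lt_or_ge m (k+1) with h' | h'
    · have := ih (Nat.lt_succ_iff.mp h')
      rw [seg_succ]
      exact this.trans (List.prefix_append _ _)
    · have : m = k + 1 := le_antisymm h h'
      simp [this]

lemma seg_eq_iff {x y : Cantor} {n : ℕ} : seg x n = seg y n ↔ ∀ i < n, x i = y i := by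
  constructor
  · intro h i hi
    have h1 : i < (seg x n).length := by simpa using hi
    have h2 : i < (seg y n).length := by simpa using hi
    have : (seg x n)[i]? = (seg y n)[i]? := congrArg (fun l : List Bool => l[i]?) h
    rw [List.getElem?_eq_getElem h1, List.getElem?_eq_getElem h2] at this
    have := Option.some.inj this
    rwa [seg_getElem x h1, seg_getElem y h2] at this
  · intro h
    apply List.ext_getElem (by simp)
    intro i h1 h2
    rw [seg_getElem x h1, seg_getElem y h2]
    exact h i (by simpa using h1)

lemma prefix_seg_eq {τ : List Bool} {x : Cantor} {n : ℕ} (h : τ <+: seg x n) :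
    seg x τ.length = τ := by
  have hlen : τ.length ≤ n := by
    have := h.length_le; simpa using this
  apply Eq.symm
  apply List.ext_getElem (by simp)
  intro i h1 h2
  rw [seg_getElem x h2]
  rw [h.getElem h1]
  exact seg_getElem x (by simp; omega)


/-! ### Section B : body / treeOf bridges -/

lemma mem_cyl_iff {x y : Cantor} {n : ℕ} : y ∈ cylinder x n ↔ ∀ i < n, y i = x i :=
  PiNat.mem_cylinder_iff

lemma self_mem_cyl (x : Cantor) (n : ℕ) : x ∈ cylinder x n := by
  rw [mem_cyl_iff]; intro i _; rfl

lemma cylinder_mem_nhds (x : Cantor) (n : ℕ) : cylinder x n ∈ nhds x :=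
  (PiNat.isOpen_cylinder _ x n).mem_nhds (self_mem_cyl x n)

lemma exists_cylinder_subset {x : Cantor} {U : Set Cantor} (hU : U ∈ nhds x) :
    ∃ n, cylinder x n ⊆ U := by
  obtain ⟨s, ⟨y, n, rfl⟩, hxs, hsU⟩ :=
    (PiNat.isTopologicalBasis_cylinders _).mem_nhds_iff.1 hU
  refine ⟨n, fun z hz => hsU ?_⟩
  rw [mem_cyl_iff] at hz hxs ⊢
  intro i hi
  rw [hz i hi, hxs i hi]

lemma seg_eq_of_mem_cylinder {x y : Cantor} {n : ℕ} (h : y ∈ cylinder x n) :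
    seg y n = seg x n := by
  rw [seg_eq_iff]
  exact mem_cyl_iff.1 h

lemma mem_cylinder_of_seg_eq {x y : Cantor} {n : ℕ} (h : seg y n = seg x n) :
    y ∈ cylinder x n := by
  rw [mem_cyl_iff]
  exact seg_eq_iff.1 h

lemma isClosed_body (p : Set (List Bool)) : IsClosed (body p) := by
  have : body p = ⋂ n, {x | seg x n ∈ p} := by
    ext x; simp [body]
  rw [this]
  apply isClosed_iInter
  intro n
  rw [← isOpen_compl_iff]
  rw [isOpen_iff_mem_nhds]
  intro x hx
  filter_upwards [cylinder_mem_nhds x n] with y hy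
  intro hyp
  simp only [Set.mem_setOf_eq] at hyp
  simp only [Set.mem_compl_iff, Set.mem_setOf_eq] at hx
  exact hx (by rwa [seg_eq_of_mem_cylinder hy] at hyp)

def treeOf (A : Set Cantor) : Set (List Bool) := {σ | ∃ x ∈ A, seg x σ.length = σ}

lemma treeOf_subset {A : Set Cantor} {p : Set (List Bool)} (h : A ⊆ body p) : treeOf A ⊆ p := by
  rintro σ ⟨x, hx, hx2⟩
  rw [← hx2]
  exact h hx _

lemma subset_body_treeOf (A : Set Cantor) : A ⊆ body (treeOf A) := by
  intro x hx n
  exact ⟨x, hx, by simp⟩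

lemma body_treeOf_eq {A : Set Cantor} (hA : IsClosed A) : body (treeOf A) = A := by
  refine Set.Subset.antisymm ?_ (subset_body_treeOf A)
  intro x hx
  by_contra hxA
  obtain ⟨n, hn⟩ := exists_cylinder_subset (hA.isOpen_compl.mem_nhds hxA)
  obtain ⟨y, hy, hseg⟩ := hx n
  rw [seg_length] at hseg
  exact hn (mem_cylinder_of_seg_eq hseg) hy

lemma perfTree_treeOf {A : Set Cantor} (hP : Perfect A) (hne : A.Nonempty) :
    PerfTree (treeOf A) := by
  obtain ⟨x₀, hx₀⟩ := hne
  refine ⟨⟨[], x₀, hx₀, by simp [seg]⟩, ?_, ?_⟩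
  · rintro σ ⟨x, hx, hx2⟩ τ hτ
    rw [← hx2] at hτ
    exact ⟨x, hx, prefix_seg_eq hτ⟩
  · rintro σ ⟨x, hx, hx2⟩
    rw [← hx2]
    -- find another point of A in the cylinder of x of level σ.length
    set n := σ.length with hn
    obtain ⟨y, ⟨hyc, hyA⟩, hyx⟩ :=
      accPt_iff_nhds.1 (hP.acc x hx) _ (cylinder_mem_nhds x n)
    -- first difference of x and y
    have hdiff : ∃ m, x m ≠ y m := by
      by_contra hc
      push_neg at hc
      exact hyx (funext fun m => (hc m).symm)
    classical
    set m := Nat.find hdiff with hm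
    have hmspec : x m ≠ y m := Nat.find_spec hdiff
    have hmmin : ∀ i < m, x i = y i := fun i hi => by
      have := Nat.find_min hdiff hi
      simpa using this
    have hnm : n ≤ m := by
      by_contra hc
      push_neg at hc
      exact hmspec ((mem_cyl_iff.1 hyc m hc).symm)
    have hsegeq : seg y m = seg x m := by
      rw [seg_eq_iff]; intro i hi; exact (hmmin i hi).symm
    have hboth : ∀ b : Bool, seg x m ++ [b] ∈ treeOf A := by
      intro b
      have hb : b = x m ∨ b = y m := by
        rcases Bool.eq_false_or_eq_true b with hb | hb <;>
          rcases Bool.eq_false_or_eq_true (x m) with hxm | hxm <;>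
          rcases Bool.eq_false_or_eq_true (y m) with hym | hym <;>
          simp_all
      rcases hb with hb | hb
      · exact ⟨x, hx, by rw [show (seg x m ++ [b]).length = m + 1 by simp, hb, seg_succ]⟩
      · exact ⟨y, hyA, by
          rw [show (seg x m ++ [b]).length = m + 1 by simp, hb, seg_succ, hsegeq]⟩
    refine ⟨seg x m, ⟨x, hx, by simp⟩, ?_, hboth false, hboth true⟩
    have : seg x n <+: seg x m := seg_prefix_seg x hnm
    simpa using this

lemma nil_mem {p : Set (List Bool)} (hp : PerfTree p) : [] ∈ p := by
  obtain ⟨σ, hσ⟩ := hp.1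
  exact hp.2.1 σ hσ [] List.nil_prefix

lemma exists_proper_ext {p : Set (List Bool)} (hp : PerfTree p) {σ : List Bool} (hσ : σ ∈ p) :
    ∃ τ ∈ p, σ <+: τ ∧ σ.length < τ.length := by
  obtain ⟨τ, hτ, hpre, hsp⟩ := hp.2.2 σ hσ
  refine ⟨τ ++ [true], hsp.2, hpre.trans (List.prefix_append _ _), ?_⟩
  have := hpre.length_le
  simp only [List.length_append, List.length_cons, List.length_nil]
  omega

lemma prefix_getD {l₁ l₂ : List Bool} (h : l₁ <+: l₂) {i : ℕ} (hi : i < l₁.length) :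
    l₂.getD i false = l₁.getD i false := by
  have hi2 : i < l₂.length := lt_of_lt_of_le hi h.length_le
  rw [List.getD_eq_getElem _ _ hi, List.getD_eq_getElem _ _ hi2]
  exact (h.getElem hi).symm

lemma exists_branch {p : Set (List Bool)} (hp : PerfTree p) {σ : List Bool} (hσ : σ ∈ p) :
    ∃ x ∈ body p, seg x σ.length = σ := by
  classical
  choose f hf1 hf2 hf3 using fun (τ : List Bool) (h : τ ∈ p) => exists_proper_ext hp h
  let c : ℕ → {l : List Bool // l ∈ p} :=
    fun n => Nat.rec ⟨σ, hσ⟩ (fun _ prev => ⟨f prev.1 prev.2, hf1 prev.1 prev.2⟩) n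
  have hc0 : (c 0).1 = σ := rfl
  have hcs : ∀ n, (c n).1 <+: (c (n+1)).1 ∧ (c n).1.length < (c (n+1)).1.length :=
    fun n => ⟨hf2 (c n).1 (c n).2, hf3 (c n).1 (c n).2⟩
  have cmono : ∀ m n, m ≤ n → (c m).1 <+: (c n).1 := by
    intro m n h
    induction n with
    | zero =>
      have : m = 0 := Nat.le_zero.mp h
      rw [this]
    | succ k ih =>
      rcases Nat.lt_or_ge m (k+1) with h' | h'
      · exact (ih (Nat.lt_succ_iff.mp h')).trans (hcs k).1
      · have : m = k + 1 := le_antisymm h h'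
        rw [this]
  have clen : ∀ n, n ≤ (c n).1.length := by
    intro n
    induction n with
    | zero => exact Nat.zero_le _
    | succ k ih => exact Nat.lt_of_le_of_lt ih (hcs k).2
  set x : Cantor := fun i => ((c (i+1)).1).getD i false with hx
  have hxval : ∀ i n, i < n → ((c n).1).getD i false = x i := by
    intro i n hi
    have h1 : (c (i+1)).1 <+: (c n).1 := cmono _ _ hi
    have h2 : i < (c (i+1)).1.length := lt_of_lt_of_le (Nat.lt_succ_self i) (clen (i+1))
    rw [prefix_getD h1 h2]
  have hseg : ∀ n, seg x n = (c n).1.take n := by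
    intro n
    apply List.ext_getElem
    · simp [Nat.min_eq_left (clen n)]
    · intro i h1 h2
      rw [seg_getElem]
      rw [List.getElem_take]
      have hi : i < n := by simpa using h1
      have hilen : i < (c n).1.length := lt_of_lt_of_le hi (clen n)
      rw [← hxval i n hi, List.getD_eq_getElem _ _ hilen]
  have hxbody : x ∈ body p := by
    intro n
    rw [hseg n]
    exact hp.2.1 (c n).1 (c n).2 _ (List.take_prefix _ _)
  refine ⟨x, hxbody, ?_⟩
  have h1 : σ <+: (c σ.length).1 := by rw [← hc0]; exact cmono 0 _ (Nat.zero_le _)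
  rw [hseg σ.length]
  exact (List.prefix_iff_eq_take.1 h1).symm

lemma body_nonempty {p : Set (List Bool)} (hp : PerfTree p) : (body p).Nonempty := by
  obtain ⟨x, hx, _⟩ := exists_branch hp (nil_mem hp)
  exact ⟨x, hx⟩

lemma append_bool_inj {l₁ l₂ : List Bool} {a b : Bool} (h : l₁ ++ [a] = l₂ ++ [b])
    (hl : l₁.length = l₂.length) : a = b := by
  have := List.append_inj_right h (by simpa using hl)
  simpa using this

lemma perfect_body {p : Set (List Bool)} (hp : PerfTree p) : Perfect (body p) := by
  refine ⟨isClosed_body p, ?_⟩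
  intro x hx
  rw [accPt_iff_nhds]
  intro U hU
  obtain ⟨n, hn⟩ := exists_cylinder_subset hU
  obtain ⟨τ, hτ, hpre, hsp⟩ := hp.2.2 (seg x n) (hx n)
  obtain ⟨y₀, hy₀, hy₀seg⟩ := exists_branch hp hsp.1
  obtain ⟨y₁, hy₁, hy₁seg⟩ := exists_branch hp hsp.2
  have hy0len : (τ ++ [false]).length = τ.length + 1 := by simp
  have hy1len : (τ ++ [true]).length = τ.length + 1 := by simp
  rw [hy0len] at hy₀seg
  rw [hy1len] at hy₁seg
  -- y₀ and y₁ agree with x below n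
  have hycyl : ∀ (y : Cantor) (b : Bool), seg y (τ.length + 1) = τ ++ [b] → y ∈ cylinder x n := by
    intro y b hy
    apply mem_cylinder_of_seg_eq
    have h1 : seg x n <+: τ ++ [b] := hpre.trans (List.prefix_append _ _)
    rw [← hy] at h1
    have := prefix_seg_eq h1
    rw [seg_length] at this
    exact this
  have hy₀cyl := hycyl y₀ false hy₀seg
  have hy₁cyl := hycyl y₁ true hy₁seg
  -- values at position τ.length
  have hval : ∀ (y : Cantor) (b : Bool), seg y (τ.length + 1) = τ ++ [b] → y τ.length = b := by
    intro y b hy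
    rw [seg_succ] at hy
    exact append_bool_inj hy (by simp)
  have h0 := hval y₀ false hy₀seg
  have h1 := hval y₁ true hy₁seg
  -- one of y₀ y₁ differs from x
  rcases Bool.eq_false_or_eq_true (x τ.length) with hxv | hxv
  · refine ⟨y₀, ⟨hn hy₀cyl, hy₀⟩, fun h => ?_⟩
    rw [← h] at hxv
    exact absurd (h0.symm.trans hxv) (by simp)
  · refine ⟨y₁, ⟨hn hy₁cyl, hy₁⟩, fun h => ?_⟩
    rw [← h] at hxv
    exact absurd (h1.symm.trans hxv) (by simp)

lemma splits_of_branches {q : Set (List Bool)} {x y : Cantor} (hx : x ∈ body q)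
    (hy : y ∈ body q) {n : ℕ} (hagree : ∀ i < n, x i = y i) (hne : x n ≠ y n) :
    Splits q (seg x n) := by
  have hxq : seg x n ++ [x n] ∈ q := by rw [← seg_succ]; exact hx (n+1)
  have hyq : seg x n ++ [y n] ∈ q := by
    have : seg y n = seg x n := seg_eq_iff.2 (fun i hi => (hagree i hi).symm)
    rw [← this, ← seg_succ]
    exact hy (n+1)
  have hcover : ∀ b : Bool, seg x n ++ [b] ∈ q := by
    intro b
    have hb : b = x n ∨ b = y n := by
      rcases Bool.eq_false_or_eq_true b with hb | hb <;>
        rcases Bool.eq_false_or_eq_true (x n) with h1 | h1 <;>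
        rcases Bool.eq_false_or_eq_true (y n) with h2 | h2 <;>
        simp_all
    rcases hb with hb | hb
    · rwa [hb]
    · rwa [hb]
  exact ⟨hcover false, hcover true⟩

lemma skew_translate_finite {q : Set (List Bool)} (hq : PerfTree q) (hsk : SkewT q)
    {u : Cantor} (hu : u ≠ czero) : (body q ∩ Tr u (body q)).Finite := by
  classical
  have hum : ∃ n, u n = true := by
    by_contra hc
    push_neg at hc
    exact hu (funext fun n => by
      rcases Bool.eq_false_or_eq_true (u n) with h | h
      · exact absurd h (hc n)
      · exact h)
  set m := Nat.find hum with hm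
  have hmspec : u m = true := Nat.find_spec hum
  rw [← Set.finite_coe_iff]
  apply Finite.of_injective (fun (z : (body q ∩ Tr u (body q) : Set Cantor)) =>
    (fun i : Fin (m+1) => (z : Cantor) i))
  rintro ⟨x, hx⟩ ⟨y, hy⟩ hφ
  simp only [Subtype.mk_eq_mk]
  by_contra hne
  have hxy : ∃ i, x i ≠ y i := by
    by_contra hc
    push_neg at hc
    exact hne (funext hc)
  set n := Nat.find hxy with hn
  have hnspec : x n ≠ y n := Nat.find_spec hxy
  have hnmin : ∀ i < n, x i = y i := fun i hi => by
    have := Nat.find_min hxy hi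
    simpa using this
  -- split node for x,y
  have hs1 : Splits q (seg x n) := splits_of_branches hx.1 hy.1 hnmin hnspec
  -- split node for the translates
  have hx' : cAdd x u ∈ body q := hx.2
  have hy' : cAdd y u ∈ body q := hy.2
  have hs2 : Splits q (seg (cAdd x u) n) := by
    apply splits_of_branches hx' hy'
    · intro i hi
      simp only [cAdd]
      rw [hnmin i hi]
    · intro hcon
      apply hnspec
      have : xor (xor (x n) (u n)) (u n) = xor (xor (y n) (u n)) (u n) := by
        rw [show xor (x n) (u n) = cAdd x u n from rfl, show xor (y n) (u n) = cAdd y u n from rfl,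
          hcon]
      simpa using this
  -- both split nodes in q of the same length
  have hq1 : seg x n ∈ q := hx.1 n
  have hq2 : seg (cAdd x u) n ∈ q := hx' n
  have heq := hsk _ hq1 _ hq2 hs1 hs2 (by simp)
  -- hence u vanishes below n
  have huz : ∀ i < n, u i = false := by
    intro i hi
    have h1 : i < (seg x n).length := by simpa using hi
    have := congrArg (fun l : List Bool => l[i]?) heq
    rw [List.getElem?_eq_getElem h1, List.getElem?_eq_getElem (by simpa using hi)] at this
    have := Option.some.inj this
    rw [seg_getElem x h1, seg_getElem (cAdd x u) (by simpa using hi)] at this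
    simp only [cAdd] at this
    rcases Bool.eq_false_or_eq_true (u i) with h | h
    · rw [h] at this
      simp at this
    · exact h
  -- so n ≤ m
  have hnm : n ≤ m := by
    by_contra hc
    push_neg at hc
    rw [huz m hc] at hmspec
    simp at hmspec
  -- but φ x = φ y forces agreement below m+1
  have := congrFun hφ ⟨n, Nat.lt_succ_of_le hnm⟩
  exact hnspec this

lemma cb_kernel {C : Set Cantor} (hC : IsClosed C) (hunc : ¬C.Countable) :
    ∃ D, Perfect D ∧ D.Nonempty ∧ D ⊆ C := by
  obtain ⟨V, D, hV, hD, hCD⟩ := exists_countable_union_perfect_of_isClosed hC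
  refine ⟨D, hD, ?_, ?_⟩
  · rcases Set.eq_empty_or_nonempty D with h | h
    · rw [h] at hCD
      simp only [Set.union_empty] at hCD
      exact absurd (hCD ▸ hV) hunc
    · exact h
  · rw [hCD]; exact Set.subset_union_right

/-- The standard disjoint family of perfect subsets of Cantor space. -/
def stdPiece (z : Cantor) : Set Cantor := {x | ∀ n, x (2*n) = z n}

lemma stdPiece_perfect (z : Cantor) : Perfect (stdPiece z) := by
  constructor
  · rw [← isOpen_compl_iff, isOpen_iff_mem_nhds]
    intro x hx
    simp only [Set.mem_compl_iff, stdPiece, Set.mem_setOf_eq, not_forall] at hx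
    obtain ⟨n, hn⟩ := hx
    filter_upwards [cylinder_mem_nhds x (2*n+1)] with y hy
    simp only [Set.mem_compl_iff, stdPiece, Set.mem_setOf_eq, not_forall]
    exact ⟨n, by rw [mem_cyl_iff.1 hy (2*n) (by omega)]; exact hn⟩
  · intro x hx
    rw [accPt_iff_nhds]
    intro U hU
    obtain ⟨n, hn⟩ := exists_cylinder_subset hU
    set y : Cantor := Function.update x (2*n+1) (!(x (2*n+1))) with hy
    have hyx : y ≠ x := by
      intro h
      have := congrFun h (2*n+1)
      rw [hy] at this
      simp [Function.update_self] at this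
    refine ⟨y, ⟨hn ?_, ?_⟩, hyx⟩
    · rw [mem_cyl_iff]
      intro i hi
      rw [hy]
      apply Function.update_of_ne
      omega
    · intro k
      rw [hy]
      rw [Function.update_of_ne (by omega)]
      exact hx k

lemma stdPiece_nonempty (z : Cantor) : (stdPiece z).Nonempty := by
  refine ⟨fun k => if k % 2 = 0 then z (k / 2) else false, ?_⟩
  intro n
  simp only [stdPiece, Set.mem_setOf_eq]
  have h1 : (2*n) % 2 = 0 := by omega
  have h2 : (2*n) / 2 = n := by omega
  simp [h1, h2]

lemma stdPiece_disjoint {z z' : Cantor} (h : z ≠ z') : Disjoint (stdPiece z) (stdPiece z') := by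
  rw [Set.disjoint_iff_inter_eq_empty]
  ext x
  simp only [Set.mem_inter_iff, stdPiece, Set.mem_setOf_eq, Set.mem_empty_iff_false, iff_false,
    not_and]
  intro h1 h2
  apply h
  funext n
  rw [← h1 n, ← h2 n]

lemma perfect_image_of_cont_inj {A : Set Cantor} (hA : Perfect A) (hAne : A.Nonempty)
    {f : Cantor → Cantor} (hf : Continuous f) (hinj : Function.Injective f) :
    Perfect (f '' A) ∧ (f '' A).Nonempty := by
  refine ⟨⟨?_, ?_⟩, hAne.image f⟩
  · have hcomp : IsCompact A := hA.closed.isCompact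
    exact (hcomp.image hf).isClosed
  · rintro y ⟨x, hx, rfl⟩
    rw [accPt_iff_nhds]
    intro U hU
    have hU' : f ⁻¹' U ∈ nhds x := hf.continuousAt.preimage_mem_nhds hU
    obtain ⟨x', ⟨hx'U, hx'A⟩, hx'x⟩ := accPt_iff_nhds.1 (hA.acc x hx) _ hU'
    exact ⟨f x', ⟨hx'U, Set.mem_image_of_mem f hx'A⟩, fun h => hx'x (hinj h)⟩

lemma farms {C : Set Cantor} (hC : Perfect C) (hne : C.Nonempty) :
    ∃ V : Cantor → Set Cantor, (∀ w, Perfect (V w) ∧ (V w).Nonempty ∧ V w ⊆ C) ∧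
      (∀ w w', w ≠ w' → Disjoint (V w) (V w')) := by
  obtain ⟨f, hfr, hfc, hfi⟩ := hC.exists_nat_bool_injection hne
  refine ⟨fun w => f '' stdPiece w, fun w => ?_, fun w w' hww => ?_⟩
  · obtain ⟨h1, h2⟩ := perfect_image_of_cont_inj (stdPiece_perfect w) (stdPiece_nonempty w)
      hfc hfi
    refine ⟨h1, h2, ?_⟩
    rintro y ⟨x, _, rfl⟩
    exact hfr ⟨x, rfl⟩
  · exact Set.disjoint_image_of_injective hfi (stdPiece_disjoint hww)

lemma clean_piece {C : Set Cantor} (hC : Perfect C) (hne : C.Nonempty) {T : Set Cantor}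
    (hT : #T < Cardinal.continuum) :
    ∃ D, Perfect D ∧ D.Nonempty ∧ D ⊆ C ∧ Disjoint D T := by
  classical
  obtain ⟨V, hV1, hV2⟩ := farms hC hne
  by_contra hcon
  push_neg at hcon
  -- every piece meets T
  have hmeet : ∀ w, ((V w) ∩ T).Nonempty := by
    intro w
    rcases Set.eq_empty_or_nonempty ((V w) ∩ T) with h | h
    · exact absurd (Set.disjoint_iff_inter_eq_empty.2 h)
        (hcon (V w) (hV1 w).1 (hV1 w).2.1 (hV1 w).2.2)
    · exact h
  -- choose a point of T per piece; injective into T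
  choose g hg using hmeet
  have hginj : Function.Injective g := by
    intro w w' h
    by_contra hww
    exact Set.disjoint_left.1 (hV2 w w' hww) (hg w).1 (h ▸ (hg w').1)
  have : Cardinal.continuum ≤ #T := by
    rw [← mk_cantor]
    exact Cardinal.mk_le_of_injective (f := fun w => (⟨g w, (hg w).2⟩ : T)) (by
      intro a b hab
      exact hginj (congrArg Subtype.val hab))
  exact absurd hT (not_lt.2 this)

/-! ### Existence of skew perfect subtrees -/

lemma exists_splitter_above {p : Set (List Bool)} (hp : PerfTree p) {σ : List Bool}
    (hσ : σ ∈ p) (m : ℕ) : ∃ τ, τ ∈ p ∧ σ <+: τ ∧ Splits p τ ∧ m < τ.length := by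
  induction m with
  | zero =>
    obtain ⟨τ, hτ, hpre, hsp⟩ := hp.2.2 σ hσ
    obtain ⟨τ', hτ', hpre', hsp'⟩ := hp.2.2 (τ ++ [true]) hsp.2
    refine ⟨τ', hτ', hpre.trans ((List.prefix_append _ _).trans hpre'), hsp', ?_⟩
    have := hpre'.length_le
    simp only [List.length_append, List.length_cons, List.length_nil] at this
    omega
  | succ k ih =>
    obtain ⟨τ, hτ, hpre, hsp, hlen⟩ := ih
    obtain ⟨τ', hτ', hpre', hsp'⟩ := hp.2.2 (τ ++ [true]) hsp.2
    refine ⟨τ', hτ', hpre.trans ((List.prefix_append _ _).trans hpre'), hsp', ?_⟩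
    have := hpre'.length_le
    simp only [List.length_append, List.length_cons, List.length_nil] at this
    omega

def parIdx (k : ℕ) : ℕ := (k-1)/2

def bitIdx (k : ℕ) : Bool := k % 2 == 0

attribute [local instance] Classical.propDecidable

noncomputable def skg {p : Set (List Bool)} (hp : PerfTree p) : ℕ → List Bool
  | 0 => (exists_splitter_above hp (nil_mem hp) 0).choose
  | (n+1) =>
    if h : skg hp (n/2) ++ [bitIdx (n+1)] ∈ p then
      (exists_splitter_above hp h (skg hp n).length).choose
    else []
  termination_by n => n
  decreasing_by
  · omega
  · omega

lemma skg_spec {p : Set (List Bool)} (hp : PerfTree p) :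
    ∀ n, (skg hp n ∈ p ∧ Splits p (skg hp n)) ∧
      (n ≠ 0 → (skg hp (parIdx n) ++ [bitIdx n] <+: skg hp n ∧
        (skg hp (n-1)).length < (skg hp n).length)) := by
  intro n
  induction n using Nat.strong_induction_on with
  | _ n ih =>
    match n with
    | 0 =>
      refine ⟨?_, by simp⟩
      have hs := (exists_splitter_above hp (nil_mem hp) 0).choose_spec
      rw [show skg hp 0 = (exists_splitter_above hp (nil_mem hp) 0).choose from by rw [skg]]
      exact ⟨hs.1, hs.2.2.1⟩
    | (m+1) =>
      have hpar : m / 2 < m + 1 := by omega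
      have hgood := (ih (m/2) hpar).1
      have hmem : skg hp (m/2) ++ [bitIdx (m+1)] ∈ p := by
        rcases Bool.eq_false_or_eq_true (bitIdx (m+1)) with h | h
        · rw [h]; exact hgood.2.2
        · rw [h]; exact hgood.2.1
      have hunfold : skg hp (m+1) =
          (exists_splitter_above hp hmem (skg hp m).length).choose := by
        rw [skg]
        rw [dif_pos hmem]
      have hs := (exists_splitter_above hp hmem (skg hp m).length).choose_spec
      rw [hunfold]
      refine ⟨⟨hs.1, hs.2.2.1⟩, fun _ => ⟨?_, ?_⟩⟩
      · have hp1 : parIdx (m+1) = m/2 := by simp [parIdx]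
        rw [hp1]
        exact hs.2.1
      · simpa using hs.2.2.2

lemma skg_mem {p : Set (List Bool)} (hp : PerfTree p) (n : ℕ) : skg hp n ∈ p :=
  ((skg_spec hp n).1).1

lemma skg_len_strictMono {p : Set (List Bool)} (hp : PerfTree p) :
    StrictMono (fun n => (skg hp n).length) := by
  apply strictMono_nat_of_lt_succ
  intro n
  have := ((skg_spec hp (n+1)).2 (by omega)).2
  simpa using this

lemma skg_parent_prefix {p : Set (List Bool)} (hp : PerfTree p) (n : ℕ) :
    skg hp (parIdx n) <+: skg hp n := by
  rcases Nat.eq_zero_or_pos n with h | h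
  · rw [h]; simp [parIdx]
  · exact (List.prefix_append _ _).trans ((skg_spec hp n).2 (by omega)).1

lemma skg_child_prefix {p : Set (List Bool)} (hp : PerfTree p) (n : ℕ) :
    skg hp n ++ [false] <+: skg hp (2*n+1) ∧ skg hp n ++ [true] <+: skg hp (2*n+2) := by
  constructor
  · have h := ((skg_spec hp (2*n+1)).2 (by omega)).1
    have h1 : parIdx (2*n+1) = n := by simp only [parIdx]; omega
    have h2 : bitIdx (2*n+1) = false := by
      have hm : (2*n+1) % 2 = 1 := by omega
      simp [bitIdx, hm]
    rwa [h1, h2] at h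
  · have h := ((skg_spec hp (2*n+2)).2 (by omega)).1
    have h1 : parIdx (2*n+2) = n := by simp only [parIdx]; omega
    have h2 : bitIdx (2*n+2) = true := by
      have hm : (2*n+2) % 2 = 0 := by omega
      simp [bitIdx, hm]
    rwa [h1, h2] at h

/-- ancestor relation on indices -/
def Anc (m n : ℕ) : Prop := ∃ k, parIdx^[k] n = m

lemma parIdx_lt {n : ℕ} (h : n ≠ 0) : parIdx n < n := by
  simp only [parIdx]; omega

lemma anc_zero (n : ℕ) : Anc 0 n := by
  induction n using Nat.strong_induction_on with
  | _ n ih =>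
    rcases Nat.eq_zero_or_pos n with h | h
    · exact ⟨0, by simp [h]⟩
    · obtain ⟨k, hk⟩ := ih (parIdx n) (parIdx_lt (by omega))
      exact ⟨k+1, by rw [Function.iterate_succ_apply, hk]⟩

lemma anc_prefix {p : Set (List Bool)} (hp : PerfTree p) {m n : ℕ} (h : Anc m n) :
    skg hp m <+: skg hp n := by
  obtain ⟨k, hk⟩ := h
  induction k generalizing n with
  | zero =>
    simp only [Function.iterate_zero, id_eq] at hk
    rw [hk]
  | succ j ih =>
    rw [Function.iterate_succ_apply] at hk
    exact (ih hk).trans (skg_parent_prefix hp n)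

lemma take_of_prefix_append {l m : List Bool} {b : Bool} (h : l <+: m ++ [b])
    (hl : l.length ≤ m.length) : l <+: m := by
  have h1 : l = (m ++ [b]).take l.length := List.prefix_iff_eq_take.1 h
  rw [List.take_append_of_le_length hl] at h1
  rw [h1]
  exact List.take_prefix _ _

lemma eq_of_prefix_same_length {l₁ l₂ L : List Bool} (h1 : l₁ <+: L) (h2 : l₂ <+: L)
    (hl : l₁.length = l₂.length) : l₁ = l₂ := by
  rw [List.prefix_iff_eq_take.1 h1, List.prefix_iff_eq_take.1 h2, hl]

/-- If two chains diverge above σ and above γ then σ = γ -/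
lemma meet_eq {σ γ A B : List Bool} {ba bb : Bool} (hne : ba ≠ bb)
    (ha : σ ++ [false] <+: A) (hb : σ ++ [true] <+: B)
    (h1 : γ ++ [ba] <+: A) (h2 : γ ++ [bb] <+: B) : σ = γ := by
  have hσA : σ <+: A := (List.prefix_append σ [false]).trans ha
  have hγA : γ <+: A := (List.prefix_append γ [ba]).trans h1
  rcases lt_trichotomy σ.length γ.length with hlt | heq | hgt
  · exfalso
    have hfa : σ ++ [false] <+: γ := by
      rcases List.prefix_or_prefix_of_prefix ha h1 with h | h
      · exact take_of_prefix_append h (by simp; omega)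
      · exfalso
        have := h.length_le
        simp at this
        omega
    have hfb : σ ++ [true] <+: γ := by
      rcases List.prefix_or_prefix_of_prefix hb h2 with h | h
      · exact take_of_prefix_append h (by simp; omega)
      · exfalso
        have := h.length_le
        simp at this
        omega
    have := eq_of_prefix_same_length hfa hfb (by simp)
    simp at this
  · exact eq_of_prefix_same_length hσA hγA heq
  · exfalso
    have hga : γ ++ [ba] <+: σ := by
      rcases List.prefix_or_prefix_of_prefix h1 ha with h | h
      · exact take_of_prefix_append h (by simp; omega)
      · exfalso
        have := h.length_le
        simp at this
        omega
    have hgb : γ ++ [bb] <+: σ := by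
      rcases List.prefix_or_prefix_of_prefix h2 hb with h | h
      · exact take_of_prefix_append h (by simp; omega)
      · exfalso
        have := h.length_le
        simp at this
        omega
    have := eq_of_prefix_same_length hga hgb (by simp)
    exact hne (append_bool_inj this rfl)

lemma skg_div {p : Set (List Bool)} (hp : PerfTree p) {a b : ℕ}
    (hab : ¬ skg hp a <+: skg hp b) (hba : ¬ skg hp b <+: skg hp a) :
    ∃ c, (skg hp c ++ [false] <+: skg hp a ∧ skg hp c ++ [true] <+: skg hp b) ∨
         (skg hp c ++ [true] <+: skg hp a ∧ skg hp c ++ [false] <+: skg hp b) := by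
  classical
  have hex : ∃ k, Anc (parIdx^[k] b) a := by
    obtain ⟨k, hk⟩ := anc_zero b
    exact ⟨k, by rw [hk]; exact anc_zero a⟩
  set k₀ := Nat.find hex with hk₀
  have hk₀spec : Anc (parIdx^[k₀] b) a := Nat.find_spec hex
  have hk₀pos : k₀ ≠ 0 := by
    intro h
    rw [h] at hk₀spec
    simp only [Function.iterate_zero, id_eq] at hk₀spec
    exact hba (anc_prefix hp hk₀spec)
  set c := parIdx^[k₀] b with hc
  set c' := parIdx^[k₀-1] b with hc'
  have hcc' : parIdx c' = c := by
    have h1 : parIdx^[(k₀-1)+1] b = parIdx (parIdx^[k₀-1] b) :=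
      Function.iterate_succ_apply' _ _ _
    rw [hc, hc', ← h1, show k₀ - 1 + 1 = k₀ by omega]
  have hc'nanc : ¬ Anc c' a := Nat.find_min hex (m := k₀ - 1) (by omega)
  have hc'ne0 : c' ≠ 0 := by
    intro h
    exact hc'nanc (h ▸ anc_zero a)
  have hancb : Anc c b := ⟨k₀, rfl⟩
  have hancc'b : Anc c' b := ⟨k₀-1, rfl⟩
  have hca : Anc c a := hk₀spec
  have hac : a ≠ c := by
    intro h
    exact hab (h ▸ anc_prefix hp hancb)
  have hex2 : ∃ j, parIdx^[j] a = c := hca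
  set j₀ := Nat.find hex2 with hj₀
  have hj₀spec : parIdx^[j₀] a = c := Nat.find_spec hex2
  have hj₀pos : j₀ ≠ 0 := by
    intro h
    rw [h] at hj₀spec
    exact hac hj₀spec
  set c'' := parIdx^[j₀-1] a with hc''
  have hcc'' : parIdx c'' = c := by
    have h1 : parIdx^[(j₀-1)+1] a = parIdx (parIdx^[j₀-1] a) :=
      Function.iterate_succ_apply' _ _ _
    rw [hc'', ← h1, show j₀ - 1 + 1 = j₀ by omega]
    exact hj₀spec
  have hc''ne : c'' ≠ c := by
    intro h
    exact Nat.find_min hex2 (m := j₀ - 1) (by omega) h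
  have hc''ne0 : c'' ≠ 0 := by
    intro h
    apply hc''ne
    rw [h] at hcc'' ⊢
    have : parIdx 0 = 0 := by simp [parIdx]
    rw [this] at hcc''
    exact hcc''
  have hancc''a : Anc c'' a := ⟨j₀-1, rfl⟩
  have hc'c'' : c' ≠ c'' := by
    intro h
    exact hc'nanc (h ▸ hancc''a)
  have hch' : c' = 2*c+1 ∨ c' = 2*c+2 := by
    have h1 := hcc'
    simp only [parIdx] at h1
    omega
  have hch'' : c'' = 2*c+1 ∨ c'' = 2*c+2 := by
    have h1 := hcc''
    simp only [parIdx] at h1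
    omega
  have hchildren := skg_child_prefix hp c
  rcases hch' with h1 | h1 <;> rcases hch'' with h2 | h2
  · exact absurd (h1.trans h2.symm) hc'c''
  · refine ⟨c, Or.inr ⟨?_, ?_⟩⟩
    · exact hchildren.2.trans (anc_prefix hp (h2 ▸ hancc''a))
    · exact hchildren.1.trans (anc_prefix hp (h1 ▸ hancc'b))
  · refine ⟨c, Or.inl ⟨?_, ?_⟩⟩
    · exact hchildren.1.trans (anc_prefix hp (h2 ▸ hancc''a))
    · exact hchildren.2.trans (anc_prefix hp (h1 ▸ hancc'b))
  · exact absurd (h1.trans h2.symm) hc'c''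

def skq {p : Set (List Bool)} (hp : PerfTree p) : Set (List Bool) :=
  {σ | ∃ n, σ <+: skg hp n}

lemma exists_skew_subtree {p : Set (List Bool)} (hp : PerfTree p) :
    ∃ q, PerfTree q ∧ SkewT q ∧ q ⊆ p := by
  classical
  refine ⟨skq hp, ⟨⟨[], 0, List.nil_prefix⟩, ?_, ?_⟩, ?_, ?_⟩
  · rintro σ ⟨n, hn⟩ τ hτ
    exact ⟨n, hτ.trans hn⟩
  · rintro σ ⟨n, hn⟩
    refine ⟨skg hp n, ⟨n, List.prefix_rfl⟩, hn, ?_, ?_⟩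
    · exact ⟨2*n+1, (skg_child_prefix hp n).1⟩
    · exact ⟨2*n+2, (skg_child_prefix hp n).2⟩
  · -- skewness
    have hsplit_eq : ∀ σ, Splits (skq hp) σ → ∃ n, σ = skg hp n := by
      rintro σ ⟨⟨a, ha⟩, ⟨b, hb⟩⟩
      have hab : ¬ skg hp a <+: skg hp b := by
        intro h
        have h1 : σ ++ [false] <+: skg hp b := ha.trans h
        have := eq_of_prefix_same_length h1 hb (by simp)
        simp at this
      have hba : ¬ skg hp b <+: skg hp a := by
        intro h
        have h1 : σ ++ [true] <+: skg hp a := hb.trans h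
        have := eq_of_prefix_same_length ha h1 (by simp)
        simp at this
      obtain ⟨c, hcase⟩ := skg_div hp hab hba
      refine ⟨c, ?_⟩
      rcases hcase with ⟨h1, h2⟩ | ⟨h1, h2⟩
      · exact meet_eq (by simp) ha hb h1 h2
      · exact meet_eq (by simp) ha hb h1 h2
    intro σ hσ τ hτ hsσ hsτ hlen
    obtain ⟨m, rfl⟩ := hsplit_eq σ hsσ
    obtain ⟨n, rfl⟩ := hsplit_eq τ hsτ
    have := (skg_len_strictMono hp).injective (a₁ := m) (a₂ := n) hlen
    rw [this]
  · rintro σ ⟨n, hn⟩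
    exact hp.2.1 _ (skg_mem hp n) _ hn

/-! ### Maximal translation-almost-disjoint family of skew bodies -/

def Special (B : Set Cantor) : Prop := ∃ q, PerfTree q ∧ SkewT q ∧ B = body q

def tad (B B' : Set Cantor) : Prop := ∀ u : Cantor, (B ∩ Tr u B').Countable

lemma cAdd_self (u : Cantor) : cAdd u u = czero := by
  funext n; simp [cAdd, czero]

lemma tad_symm_aux {B S : Set Cantor} {u : Cantor} :
    Tr u (B ∩ Tr u S) = Tr u B ∩ S := by
  rw [Tr_inter, Tr_Tr, cAdd_self, Tr_zero]

lemma special_closed {S : Set Cantor} (h : Special S) : IsClosed S := by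
  obtain ⟨q, hq, hsk, rfl⟩ := h
  exact isClosed_body q

lemma special_nonempty {S : Set Cantor} (h : Special S) : S.Nonempty := by
  obtain ⟨q, hq, hsk, rfl⟩ := h
  exact body_nonempty hq

def TadFam (F : Set (Set Cantor)) : Prop :=
  (∀ B ∈ F, Special B) ∧ ∀ B ∈ F, ∀ B' ∈ F, B ≠ B' → tad B B'

lemma exists_maximal_tad :
    ∃ 𝒜 : Set (Set Cantor), TadFam 𝒜 ∧
      (∀ S, Special S → (∀ B ∈ 𝒜, ∀ u : Cantor, (S ∩ Tr u B).Countable ∧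
        (B ∩ Tr u S).Countable) → S ∈ 𝒜) := by
  obtain ⟨M, hM⟩ := zorn_subset {F : Set (Set Cantor) | TadFam F} (by
    intro c hc hchain
    refine ⟨⋃₀ c, ⟨?_, ?_⟩, fun s hs => Set.subset_sUnion_of_mem hs⟩
    · rintro B ⟨F, hF, hBF⟩
      exact (hc hF).1 B hBF
    · rintro B ⟨F, hF, hBF⟩ B' ⟨F', hF', hBF'⟩ hne
      rcases hchain.total hF hF' with h | h
      · exact (hc hF').2 B (h hBF) B' hBF' hne
      · exact (hc hF).2 B hBF B' (h hBF') hne)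
  refine ⟨M, hM.prop, ?_⟩
  intro S hS hcompat
  by_contra hSM
  have hins : insert S M ∈ {F : Set (Set Cantor) | TadFam F} := by
    constructor
    · rintro B (rfl | hB)
      · exact hS
      · exact hM.prop.1 B hB
    · rintro B (rfl | hB) B' (rfl | hB') hne
      · exact absurd rfl hne
      · exact fun u => (hcompat B' hB' u).1
      · exact fun u => (hcompat B hB u).2
      · exact hM.prop.2 B hB B' hB' hne
  have := hM.le_of_ge hins (Set.subset_insert S M)
  exact hSM (this (Set.mem_insert S M))

lemma body_mono {q p : Set (List Bool)} (h : q ⊆ p) : body q ⊆ body p := by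
  intro x hx n
  exact h (hx n)

lemma density {𝒜 : Set (Set Cantor)} (hfam : TadFam 𝒜)
    (hmax : ∀ S, Special S → (∀ B ∈ 𝒜, ∀ u : Cantor, (S ∩ Tr u B).Countable ∧
        (B ∩ Tr u S).Countable) → S ∈ 𝒜)
    {P : Set Cantor} (hP : Perfect P) (hne : P.Nonempty) :
    ∃ B ∈ 𝒜, ∃ u, ∃ D, Perfect D ∧ D.Nonempty ∧ D ⊆ P ∧ D ⊆ Tr u B := by
  classical
  -- take a skew perfect subtree of the tree of P
  have hPT : PerfTree (treeOf P) := perfTree_treeOf hP hne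
  obtain ⟨q, hq, hsk, hqsub⟩ := exists_skew_subtree hPT
  set S := body q with hSdef
  have hSP : S ⊆ P := by
    have h1 : body q ⊆ body (treeOf P) := body_mono hqsub
    rwa [body_treeOf_eq hP.closed] at h1
  have hSsp : Special S := ⟨q, hq, hsk, rfl⟩
  by_cases hcompat : ∀ B ∈ 𝒜, ∀ u : Cantor, (S ∩ Tr u B).Countable ∧ (B ∩ Tr u S).Countable
  · -- then S ∈ 𝒜 and S itself works with u = 0
    refine ⟨S, hmax S hSsp hcompat, czero, S, ?_, body_nonempty hq, hSP, by simp⟩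
    · have := perfect_body hq
      exact this
  · push_neg at hcompat
    obtain ⟨B, hB, u, hunc⟩ := hcompat
    rcases Classical.em ((S ∩ Tr u B).Countable) with h1 | h1
    · -- then the second one is uncountable
      have h2 : ¬ (B ∩ Tr u S).Countable := fun h => (hunc h1) h
      -- transfer it to S ∩ Tr u B ... use symmetry
      have h3 : ¬ (S ∩ Tr u B).Countable := by
        intro hcon
        apply h2
        have : B ∩ Tr u S = Tr u (S ∩ Tr u B) := by
          rw [Tr_inter, Tr_Tr, cAdd_self, Tr_zero, Set.inter_comm]
        rw [this]
        exact countable_Tr hcon u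
      exact absurd h1 h3
    · -- S ∩ Tr u B is uncountable and closed
      have hclosed : IsClosed (S ∩ Tr u B) :=
        (isClosed_body q).inter (isClosed_Tr (special_closed (hfam.1 B hB)) u)
      obtain ⟨D, hD, hDne, hDsub⟩ := cb_kernel hclosed h1
      exact ⟨B, hB, u, D, hD, hDne, (hDsub.trans Set.inter_subset_left).trans hSP,
        hDsub.trans Set.inter_subset_right⟩

/-! ### The non-transitive lemma : recursion machinery -/

abbrev θ : Type := (Cardinal.continuum.ord).ToType

lemma mk_theta : #θ = Cardinal.continuum := by
  rw [Cardinal.mk_toType, Cardinal.card_ord]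

section NTrec

variable (Z C₀ : Set Cantor) (V : Cantor → Set Cantor) (σen : θ → Set Cantor)

/-- the collection of perfect sets with uncountable trace on C₀ -/
def InCal (C : Set Cantor) : Prop := Perfect C ∧ C.Nonempty ∧ ¬(C ∩ C₀).Countable

def NTGood (α : θ) (prev : ∀ β : θ, β < α → Cantor × Set Cantor)
    (out : Cantor × Set Cantor) : Prop :=
  (InCal C₀ (σen α) → Perfect out.2 ∧ out.2.Nonempty ∧ out.2 ⊆ σen α) ∧
  (¬ InCal C₀ (σen α) → out.2 = ∅) ∧
  ((∃ w, out.2 ⊆ V w ∧ out.2.Nonempty) ∨ (∀ w, (out.2 ∩ V w).Countable)) ∧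
  (out.1 ∈ Z ∧ out.1 ∈ C₀) ∧
  out.1 ∉ out.2 ∧
  (∀ β (h : β < α), out.1 ∉ (prev β h).2 ∧ out.1 ≠ (prev β h).1 ∧ (prev β h).1 ∉ out.2)

noncomputable def NTF : θ → Cantor × Set Cantor :=
  (IsWellFounded.wf (r := ((· < ·) : θ → θ → Prop))).fix
    (fun α IH => if h : ∃ out, NTGood Z C₀ V σen α IH out then h.choose else (czero, ∅))

lemma NTF_eq (α : θ) : NTF Z C₀ V σen α =
    if h : ∃ out, NTGood Z C₀ V σen α (fun β _ => NTF Z C₀ V σen β) out then h.choose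
    else (czero, ∅) :=
  WellFounded.fix_eq _ _ α

/-- The core stage-existence lemma. -/
lemma NT_stage
    (hC₀ : Perfect C₀)
    (hcrowd : ∀ D, Perfect D → D.Nonempty → D ⊆ C₀ → ¬(#(D ∩ Z : Set Cantor) < Cardinal.continuum))
    (hV1 : ∀ w, Perfect (V w) ∧ (V w).Nonempty ∧ V w ⊆ C₀)
    (hV2 : ∀ w w', w ≠ w' → Disjoint (V w) (V w'))
    (α : θ) (prev : ∀ β : θ, β < α → Cantor × Set Cantor)
    (hdisc : ∀ β (h : β < α), (∃ w, (prev β h).2 ⊆ V w ∧ (prev β h).2.Nonempty) ∨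
      (∀ w, ((prev β h).2 ∩ V w).Countable)) :
    ∃ out, NTGood Z C₀ V σen α prev out := by
  classical
  -- the set of previously chosen points
  set zs : Set Cantor := Set.range (fun β : Set.Iio α => (prev β.1 β.2).1) with hzs
  have hzssmall : #zs < Cardinal.continuum :=
    lt_of_le_of_lt Cardinal.mk_range_le (Cardinal.mk_Iio_ord_toType α)
  -- choose E
  have hE : ∃ E : Set Cantor,
      (InCal C₀ (σen α) → Perfect E ∧ E.Nonempty ∧ E ⊆ σen α) ∧
      (¬ InCal C₀ (σen α) → E = ∅) ∧
      ((∃ w, E ⊆ V w ∧ E.Nonempty) ∨ (∀ w, (E ∩ V w).Countable)) ∧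
      Disjoint E zs := by
    by_cases hin : InCal C₀ (σen α)
    · have hin' := hin
      obtain ⟨hσp, hσne, hσunc⟩ := hin'
      have hKcl : IsClosed (σen α ∩ C₀) := hσp.closed.inter hC₀.closed
      obtain ⟨K, hKperf, hKne, hKsub⟩ := cb_kernel hKcl hσunc
      by_cases hheavy : ∃ w, ¬(K ∩ V w).Countable
      · obtain ⟨w, hw⟩ := hheavy
        have hKVcl : IsClosed (K ∩ V w) := hKperf.closed.inter (hV1 w).1.closed
        obtain ⟨K', hK'perf, hK'ne, hK'sub⟩ := cb_kernel hKVcl hw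
        obtain ⟨E, hEperf, hEne, hEsub, hEdisj⟩ := clean_piece hK'perf hK'ne hzssmall
        refine ⟨E, fun _ => ⟨hEperf, hEne, ?_⟩, fun h => absurd hin h, ?_, hEdisj⟩
        · exact ((hEsub.trans hK'sub).trans Set.inter_subset_left).trans
            (hKsub.trans Set.inter_subset_left)
        · exact Or.inl ⟨w, (hEsub.trans hK'sub).trans Set.inter_subset_right, hEne⟩
      · push_neg at hheavy
        obtain ⟨E, hEperf, hEne, hEsub, hEdisj⟩ := clean_piece hKperf hKne hzssmall
        refine ⟨E, fun _ => ⟨hEperf, hEne, (hEsub.trans hKsub).trans Set.inter_subset_left⟩,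
          fun h => absurd hin h, Or.inr (fun w => ?_), hEdisj⟩
        exact (hheavy w).mono (Set.inter_subset_inter_left _ hEsub)
    · exact ⟨∅, fun h => absurd h hin, fun _ => rfl, Or.inr (by simp), by simp⟩
  obtain ⟨E, hE1, hE2, hE3, hE4⟩ := hE
  -- fresh farm
  set used : Set Cantor :=
    {w | (∃ β : Set.Iio α, (prev β.1 β.2).2 ⊆ V w ∧ ((prev β.1 β.2).2).Nonempty) ∨
      (E ⊆ V w ∧ E.Nonempty)} with hused
  have husedsmall : #used < Cardinal.continuum := by
    have hsplit : used ⊆ {w | ∃ β : Set.Iio α, (prev β.1 β.2).2 ⊆ V w ∧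
        ((prev β.1 β.2).2).Nonempty} ∪ {w | E ⊆ V w ∧ E.Nonempty} := by
      intro w hw
      rcases hw with h | h
      · exact Or.inl h
      · exact Or.inr h
    refine lt_of_le_of_lt (Cardinal.mk_le_mk_of_subset hsplit) ?_
    refine lt_of_le_of_lt (Cardinal.mk_union_le _ _) ?_
    apply Cardinal.add_lt_of_lt Cardinal.aleph0_le_continuum
    · -- injection into Iio α
      have : ∀ w : {w | ∃ β : Set.Iio α, (prev β.1 β.2).2 ⊆ V w ∧
          ((prev β.1 β.2).2).Nonempty}, ∃ β : Set.Iio α, (prev β.1 β.2).2 ⊆ V w.1 ∧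
          ((prev β.1 β.2).2).Nonempty := fun w => w.2
      choose g hg using this
      have hginj : Function.Injective g := by
        intro w w' hww
        by_contra hne
        have h1 := hg w
        have h2 := hg w'
        rw [hww] at h1
        obtain ⟨x, hx⟩ := h2.2
        exact Set.disjoint_left.1 (hV2 w.1 w'.1 (fun h => hne (Subtype.ext h)))
          (h1.1 hx) (h2.1 hx)
      exact lt_of_le_of_lt (Cardinal.mk_le_of_injective hginj)
        (Cardinal.mk_Iio_ord_toType α)
    · -- at most one possible w
      rcases Set.eq_empty_or_nonempty E with hEe | hEne
      · have : {w | E ⊆ V w ∧ E.Nonempty} = ∅ := by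
          ext w
          simp [hEe, Set.not_nonempty_empty]
        rw [this, Cardinal.mk_emptyCollection]
        exact Cardinal.continuum_pos
      · have hsub : {w | E ⊆ V w ∧ E.Nonempty}.Subsingleton := by
          intro w hw w' hw'
          by_contra hne
          obtain ⟨x, hx⟩ := hEne
          exact Set.disjoint_left.1 (hV2 w w' hne) (hw.1 hx) (hw'.1 hx)
        exact lt_of_le_of_lt hsub.countable.le_aleph0 Cardinal.aleph0_lt_continuum
  obtain ⟨w₀, hw₀⟩ : ∃ w, w ∉ used := by
    by_contra hc
    push_neg at hc
    have : (Set.univ : Set Cantor) ⊆ used := fun w _ => hc w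
    have h1 : Cardinal.continuum ≤ #used := by
      calc Cardinal.continuum = #Cantor := mk_cantor.symm
      _ = #(Set.univ : Set Cantor) := Cardinal.mk_univ.symm
      _ ≤ #used := Cardinal.mk_le_mk_of_subset this
    exact absurd husedsmall (not_lt.2 h1)
  -- pollution on the fresh farm
  set Pol : Set Cantor :=
    (⋃ β : Set.Iio α, ((prev β.1 β.2).2 ∩ V w₀)) ∪ (E ∩ V w₀) with hPoldef
  have hPolsmall : #Pol < Cardinal.continuum := by
    refine lt_of_le_of_lt (Cardinal.mk_union_le _ _) ?_
    apply Cardinal.add_lt_of_lt Cardinal.aleph0_le_continuum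
    · refine lt_of_le_of_lt (Cardinal.mk_iUnion_le _) ?_
      apply Cardinal.mul_lt_of_lt Cardinal.aleph0_le_continuum
        (Cardinal.mk_Iio_ord_toType α)
      refine lt_of_le_of_lt (ciSup_le' ?_) Cardinal.aleph0_lt_continuum
      intro β
      rcases hdisc β.1 β.2 with ⟨w, hw, hwne⟩ | hlight
      · have hwused : w ∈ used := Or.inl ⟨β, hw, hwne⟩
        have : (prev β.1 β.2).2 ∩ V w₀ = ∅ := by
          rw [Set.eq_empty_iff_forall_notMem]
          intro x ⟨hx1, hx2⟩
          exact Set.disjoint_left.1 (hV2 w w₀ (fun h => hw₀ (h ▸ hwused))) (hw hx1) hx2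
        rw [this]
        simp
      · exact (hlight w₀).le_aleph0
    · rcases hE3 with ⟨w, hw, hwne⟩ | hlight
      · have hwused : w ∈ used := Or.inr ⟨hw, hwne⟩
        have : E ∩ V w₀ = ∅ := by
          rw [Set.eq_empty_iff_forall_notMem]
          intro x ⟨hx1, hx2⟩
          exact Set.disjoint_left.1 (hV2 w w₀ (fun h => hw₀ (h ▸ hwused))) (hw hx1) hx2
        rw [this, Cardinal.mk_emptyCollection]
        exact Cardinal.continuum_pos
      · exact lt_of_le_of_lt (hlight w₀).le_aleph0 Cardinal.aleph0_lt_continuum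
  -- the clean piece inside the fresh farm
  have hT : #(Pol ∪ zs : Set Cantor) < Cardinal.continuum :=
    lt_of_le_of_lt (Cardinal.mk_union_le _ _)
      (Cardinal.add_lt_of_lt Cardinal.aleph0_le_continuum hPolsmall hzssmall)
  obtain ⟨W, hWperf, hWne, hWsub, hWdisj⟩ := clean_piece (hV1 w₀).1 (hV1 w₀).2.1 hT
  -- pick a point of Z inside W
  have hWZ : (W ∩ Z).Nonempty := by
    rcases Set.eq_empty_or_nonempty (W ∩ Z) with h | h
    · exfalso
      apply hcrowd W hWperf hWne (hWsub.trans (hV1 w₀).2.2)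
      rw [h, Cardinal.mk_emptyCollection]
      exact Cardinal.continuum_pos
    · exact h
  obtain ⟨z, hzW, hzZ⟩ := hWZ
  refine ⟨(z, E), hE1, hE2, hE3, ⟨hzZ, (hWsub.trans (hV1 w₀).2.2) hzW⟩, ?_, ?_⟩
  · -- z ∉ E
    intro hzE
    have : z ∈ Pol := Or.inr ⟨hzE, hWsub hzW⟩
    exact Set.disjoint_left.1 hWdisj hzW (Or.inl this)
  · intro β h
    refine ⟨?_, ?_, ?_⟩
    · intro hzprev
      have : z ∈ Pol := Or.inl (Set.mem_iUnion.2 ⟨⟨β, h⟩, hzprev, hWsub hzW⟩)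
      exact Set.disjoint_left.1 hWdisj hzW (Or.inl this)
    · intro hzeq
      have : z ∈ zs := ⟨⟨β, h⟩, hzeq.symm⟩
      exact Set.disjoint_left.1 hWdisj hzW (Or.inr this)
    · intro hprevE
      have : (prev β h).1 ∈ zs := ⟨⟨β, h⟩, rfl⟩
      exact Set.disjoint_left.1 hE4 hprevE this

lemma NTF_good
    (hC₀ : Perfect C₀)
    (hcrowd : ∀ D, Perfect D → D.Nonempty → D ⊆ C₀ → ¬(#(D ∩ Z : Set Cantor) < Cardinal.continuum))
    (hV1 : ∀ w, Perfect (V w) ∧ (V w).Nonempty ∧ V w ⊆ C₀)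
    (hV2 : ∀ w w', w ≠ w' → Disjoint (V w) (V w')) :
    ∀ α, NTGood Z C₀ V σen α (fun β _ => NTF Z C₀ V σen β) (NTF Z C₀ V σen α) := by
  intro α
  induction α using WellFoundedLT.induction with
  | _ α ih =>
    have hstage := NT_stage Z C₀ V σen hC₀ hcrowd hV1 hV2 α
      (fun β _ => NTF Z C₀ V σen β) (fun β h => (ih β h).2.2.1)
    rw [NTF_eq Z C₀ V σen α, dif_pos hstage]
    exact hstage.choose_spec

end NTrec

lemma NT {Z : Set Cantor} (hZ : #Z = Cardinal.continuum) :
    ∃ Z' ⊆ Z, #Z' = Cardinal.continuum ∧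
      ∀ C, Perfect C → C.Nonempty → ∃ D, Perfect D ∧ D.Nonempty ∧ D ⊆ C ∧
        #(D ∩ Z' : Set Cantor) < Cardinal.continuum := by
  classical
  by_cases hcr : ∃ C₀, Perfect C₀ ∧ C₀.Nonempty ∧ ∀ D, Perfect D → D.Nonempty → D ⊆ C₀ →
      ¬(#(D ∩ Z : Set Cantor) < Cardinal.continuum)
  · obtain ⟨C₀, hC₀perf, hC₀ne, hcrowd⟩ := hcr
    obtain ⟨V, hV1, hV2⟩ := farms hC₀perf hC₀ne
    -- enumeration of the relevant perfect sets
    have henum : ∃ σen : θ → Set Cantor, ∀ C, InCal C₀ C → ∃ α, σen α = C := by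
      set 𝒞 := {C : Set Cantor | InCal C₀ C} with h𝒞
      have hinj : Function.Injective (fun C : ↥𝒞 => treeOf C.1) := by
        intro C C' h
        apply Subtype.ext
        have h' : treeOf C.1 = treeOf C'.1 := h
        have h1 : body (treeOf C.1) = body (treeOf C'.1) := by rw [h']
        rwa [body_treeOf_eq C.2.1.closed, body_treeOf_eq C'.2.1.closed] at h1
      have hle : #↥𝒞 ≤ #θ := by
        refine le_trans (Cardinal.mk_le_of_injective hinj) ?_
        rw [mk_theta]
        have h1 : #(Set (List Bool)) = Cardinal.continuum := by
          rw [Cardinal.mk_set, Cardinal.mk_list_eq_aleph0, Cardinal.two_power_aleph0]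
        rw [h1]
      obtain ⟨f⟩ := (Cardinal.le_def _ _).1 hle
      refine ⟨fun α => if h : ∃ c : ↥𝒞, f c = α then (h.choose).1 else ∅, ?_⟩
      intro C hC
      refine ⟨f ⟨C, hC⟩, ?_⟩
      have hex : ∃ c : ↥𝒞, f c = f ⟨C, hC⟩ := ⟨⟨C, hC⟩, rfl⟩
      show (if h : ∃ c : ↥𝒞, f c = f ⟨C, hC⟩ then (h.choose).1 else ∅) = C
      rw [dif_pos hex]
      have := f.injective hex.choose_spec
      rw [this]
    obtain ⟨σen, hσen⟩ := henum
    have hgood := NTF_good Z C₀ V σen hC₀perf hcrowd hV1 hV2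
    set Z' : Set Cantor := Set.range (fun α => (NTF Z C₀ V σen α).1) with hZ'
    have hZ'Z : Z' ⊆ Z := by
      rintro x ⟨α, rfl⟩
      exact (hgood α).2.2.2.1.1
    have hZ'C₀ : Z' ⊆ C₀ := by
      rintro x ⟨α, rfl⟩
      exact (hgood α).2.2.2.1.2
    have hZ'mk : #Z' = Cardinal.continuum := by
      rw [hZ']
      rw [Cardinal.mk_range_eq _ ?_, mk_theta]
      intro a b hab
      by_contra hne
      rcases lt_trichotomy a b with h | h | h
      · exact ((hgood b).2.2.2.2.2 a h).2.1 hab.symm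
      · exact hne h
      · exact ((hgood a).2.2.2.2.2 b h).2.1 hab
    refine ⟨Z', hZ'Z, hZ'mk, ?_⟩
    intro C hCperf hCne
    by_cases hC : InCal C₀ C
    · obtain ⟨α, hα⟩ := hσen C hC
      have h1 := (hgood α).1 (hα ▸ hC)
      refine ⟨(NTF Z C₀ V σen α).2, h1.1, h1.2.1, hα ▸ h1.2.2, ?_⟩
      have hempty : (NTF Z C₀ V σen α).2 ∩ Z' = ∅ := by
        rw [Set.eq_empty_iff_forall_notMem]
        rintro x ⟨hxD, ⟨β, rfl⟩⟩
        rcases lt_trichotomy β α with h | h | h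
        · exact ((hgood α).2.2.2.2.2 β h).2.2 hxD
        · rw [h] at hxD
          exact (hgood α).2.2.2.2.1 hxD
        · exact ((hgood β).2.2.2.2.2 α h).1 hxD
      rw [hempty, Cardinal.mk_emptyCollection]
      exact Cardinal.continuum_pos
    · -- C has countable trace on C₀
      have hcount : (C ∩ C₀).Countable := by
        by_contra h
        exact hC ⟨hCperf, hCne, h⟩
      refine ⟨C, hCperf, hCne, subset_rfl, ?_⟩
      have hsub : C ∩ Z' ⊆ C ∩ C₀ := Set.inter_subset_inter_right C hZ'C₀
      exact lt_of_le_of_lt (Cardinal.mk_le_mk_of_subset hsub)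
        (mk_set_lt_continuum_of_countable hcount)
  · push_neg at hcr
    refine ⟨Z, subset_rfl, hZ, ?_⟩
    intro C hCperf hCne
    obtain ⟨D, hD1, hD2, hD3, hD4⟩ := hcr C hCperf hCne
    exact ⟨D, hD1, hD2, hD3, hD4⟩

/-! ### xor algebra helpers -/

lemma cAdd_comm (a b : Cantor) : cAdd a b = cAdd b a := by
  funext n; simp [cAdd, Bool.xor_comm]

lemma cAdd_czero (a : Cantor) : cAdd a czero = a := by
  funext n; simp [cAdd, czero]

lemma czero_cAdd (a : Cantor) : cAdd czero a = a := by
  funext n; simp [cAdd, czero]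

lemma cAdd_cancel_left (a b : Cantor) : cAdd a (cAdd a b) = b := by
  funext n; simp [cAdd, ← Bool.xor_assoc]

lemma eq_of_cAdd_eq_czero {a b : Cantor} (h : cAdd a b = czero) : a = b := by
  have h1 : cAdd (cAdd a b) b = cAdd czero b := by rw [h]
  rwa [cAdd_cAdd, czero_cAdd] at h1

/-! ### Main theorem assembly -/

lemma main_theorem (X : Set Cantor) (hX : #X = Cardinal.continuum) :
    ∃ X' ⊆ X, #X' = Cardinal.continuum ∧
      ∀ p, PerfTree p → ∃ q, PerfTree q ∧ q ⊆ p ∧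
        ∀ t : Cantor, #((((fun x => cAdd x t) '' body q) ∩ X') : Set Cantor) <
          Cardinal.continuum := by
  classical
  obtain ⟨𝒜, hfam, hmax⟩ := exists_maximal_tad
  by_cases hfat : ∃ B ∈ 𝒜, ∃ u₀ : Cantor, ¬(#(X ∩ Tr u₀ B : Set Cantor) < Cardinal.continuum)
  · -- Case 2 : a fat translate exists
    obtain ⟨B₀, hB₀, u₀, hfat₀⟩ := hfat
    obtain ⟨s₀, hs₀p, hs₀sk, hB₀eq⟩ := hfam.1 B₀ hB₀
    set Y : Set Cantor := X ∩ Tr u₀ B₀ with hYdef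
    set Z : Set Cantor := (fun x => cAdd x u₀) '' Y with hZdef
    have hZmk : #Z = Cardinal.continuum := by
      rw [hZdef, Cardinal.mk_image_eq (cAdd_inj u₀)]
      exact le_antisymm (mk_set_le_continuum _) (not_lt.1 hfat₀)
    obtain ⟨Z', hZ'Z, hZ'mk, hZ'prop⟩ := NT hZmk
    set X' : Set Cantor := (fun z => cAdd z u₀) '' Z' with hX'def
    have hX'Y : X' ⊆ Y := by
      rintro x' ⟨z, hz, rfl⟩
      obtain ⟨y, hy, rfl⟩ := hZ'Z hz
      show cAdd (cAdd y u₀) u₀ ∈ Y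
      rw [cAdd_cAdd]
      exact hy
    have hX'X : X' ⊆ X := fun x hx => (hX'Y hx).1
    have hX'tr : ∀ x' ∈ X', cAdd x' u₀ ∈ body s₀ := by
      intro x' hx'
      have := (hX'Y hx').2
      rw [mem_Tr, hB₀eq] at this
      exact this
    have hX'Z' : ∀ x' ∈ X', cAdd x' u₀ ∈ Z' := by
      rintro x' ⟨z, hz, rfl⟩
      show cAdd (cAdd z u₀) u₀ ∈ Z'
      rw [cAdd_cAdd]
      exact hz
    have hX'mk : #X' = Cardinal.continuum := by
      rw [hX'def, Cardinal.mk_image_eq (cAdd_inj u₀), hZ'mk]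
    refine ⟨X', hX'X, hX'mk, ?_⟩
    intro p hp
    obtain ⟨B, hB, u, D, hD, hDne, hDP, hDT⟩ :=
      density hfam hmax (perfect_body hp) (body_nonempty hp)
    by_cases hBB : B = B₀
    · -- the translate lands in B₀ : use the NT property
      subst hBB
      set C₁ : Set Cantor := (fun x => cAdd x u) '' D with hC₁def
      have hC₁Tr : C₁ = Tr u D := image_cAdd_eq_Tr u D
      have hC₁perf : Perfect C₁ := hC₁Tr ▸ perfect_Tr hD u
      have hC₁ne : C₁.Nonempty := hC₁Tr ▸ nonempty_Tr hDne u
      obtain ⟨D₁, hD₁perf, hD₁ne, hD₁sub, hD₁small⟩ := hZ'prop C₁ hC₁perf hC₁ne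
      set D' : Set Cantor := (fun x => cAdd x u) '' D₁ with hD'def
      have hD'Tr : D' = Tr u D₁ := image_cAdd_eq_Tr u D₁
      have hD'perf : Perfect D' := hD'Tr ▸ perfect_Tr hD₁perf u
      have hD'ne : D'.Nonempty := hD'Tr ▸ nonempty_Tr hD₁ne u
      have hD'D : D' ⊆ D := by
        rintro d' ⟨d₁, hd₁, rfl⟩
        obtain ⟨d, hd, rfl⟩ := hD₁sub hd₁
        show cAdd (cAdd d u) u ∈ D
        rw [cAdd_cAdd]
        exact hd
      refine ⟨treeOf D', perfTree_treeOf hD'perf hD'ne,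
        treeOf_subset (hD'D.trans hDP), ?_⟩
      intro t
      rw [body_treeOf_eq hD'perf.closed]
      by_cases htu : cAdd t u = u₀
      · -- the single dangerous translate : controlled by D₁ ∩ Z'
        have hsub : (fun x => cAdd x u₀) '' (((fun x => cAdd x t) '' D') ∩ X') ⊆
            (D₁ ∩ Z' : Set Cantor) := by
          rintro - ⟨x', ⟨⟨d', hd', rfl⟩, hx'X'⟩, rfl⟩
          constructor
          · obtain ⟨d₁, hd₁, rfl⟩ := hd'
            show cAdd (cAdd (cAdd d₁ u) t) u₀ ∈ D₁
            have heq : cAdd (cAdd (cAdd d₁ u) t) u₀ = d₁ := by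
              rw [cAdd_assoc, cAdd_assoc]
              have h1 : cAdd u (cAdd t u₀) = czero := by
                rw [← htu]
                funext n
                rcases Bool.eq_false_or_eq_true (u n) with h | h <;>
                  rcases Bool.eq_false_or_eq_true (t n) with h' | h' <;>
                    simp [cAdd, czero, h, h']
              rw [h1, cAdd_czero]
            rw [heq]
            exact hd₁
          · exact hX'Z' _ hx'X'
        have hGmk : #((((fun x => cAdd x t) '' D') ∩ X') : Set Cantor) =
            #((fun x => cAdd x u₀) '' (((fun x => cAdd x t) '' D') ∩ X') : Set Cantor) :=
          (Cardinal.mk_image_eq (cAdd_inj u₀)).symm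
        rw [hGmk]
        exact lt_of_le_of_lt (Cardinal.mk_le_mk_of_subset hsub) hD₁small
      · -- any other translate : finite by skewness
        set w : Cantor := cAdd (cAdd t u) u₀ with hwdef
        have hwne : w ≠ czero := by
          intro h
          exact htu (eq_of_cAdd_eq_czero h)
        have hfin : (body s₀ ∩ Tr w (body s₀)).Finite :=
          skew_translate_finite hs₀p hs₀sk hwne
        have hsub : (fun x => cAdd x u₀) '' (((fun x => cAdd x t) '' D') ∩ X') ⊆
            body s₀ ∩ Tr w (body s₀) := by
          rintro - ⟨x', ⟨⟨d', hd', rfl⟩, hx'X'⟩, rfl⟩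
          constructor
          · exact hX'tr _ hx'X'
          · show cAdd (cAdd (cAdd d' t) u₀) w ∈ body s₀
            have hd'B : cAdd (cAdd d' t) (cAdd t u) ∈ body s₀ := by
              rw [cAdd_assoc, cAdd_cancel_left]
              have := hDT (hD'D hd')
              rw [mem_Tr, hB₀eq] at this
              exact this
            have heq : cAdd (cAdd (cAdd d' t) u₀) w = cAdd (cAdd d' t) (cAdd t u) := by
              rw [cAdd_assoc, hwdef]
              congr 1
              rw [cAdd_comm u₀ _, cAdd_cAdd]
            rw [heq]
            exact hd'B
        have hGfin : ((((fun x => cAdd x t) '' D') ∩ X') : Set Cantor).Finite := by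
          have himfin : ((fun x => cAdd x u₀) ''
              (((fun x => cAdd x t) '' D') ∩ X')).Finite := hfin.subset hsub
          exact Set.Finite.of_finite_image himfin ((cAdd_inj u₀).injOn)
        exact lt_of_le_of_lt hGfin.countable.le_aleph0 Cardinal.aleph0_lt_continuum
    · -- B ≠ B₀ : countable by translation-almost-disjointness
      refine ⟨treeOf D, perfTree_treeOf hD hDne, treeOf_subset hDP, ?_⟩
      intro t
      rw [body_treeOf_eq hD.closed]
      have hsub : ((fun x => cAdd x t) '' D) ∩ X' ⊆
          Tr (cAdd t u) B ∩ Tr u₀ B₀ := by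
        rintro x' ⟨⟨d, hd, rfl⟩, hx'X'⟩
        constructor
        · show cAdd (cAdd d t) (cAdd t u) ∈ B
          rw [cAdd_assoc, cAdd_cancel_left]
          exact hDT hd
        · exact (hX'Y hx'X').2
      have hcnt : (Tr (cAdd t u) B ∩ Tr u₀ B₀).Countable := by
        have heq : Tr (cAdd t u) B ∩ Tr u₀ B₀ =
            Tr (cAdd t u) (B ∩ Tr (cAdd (cAdd t u) u₀) B₀) := by
          rw [Tr_inter, Tr_Tr, cAdd_cancel_left]
        rw [heq]
        exact countable_Tr (hfam.2 B hB B₀ hB₀ hBB _) _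
      exact lt_of_le_of_lt (Cardinal.mk_le_mk_of_subset hsub)
        (mk_set_lt_continuum_of_countable hcnt)
  · -- Case 1 : no fat translate, X itself works
    push_neg at hfat
    refine ⟨X, subset_rfl, hX, ?_⟩
    intro p hp
    obtain ⟨B, hB, u, D, hD, hDne, hDP, hDT⟩ :=
      density hfam hmax (perfect_body hp) (body_nonempty hp)
    refine ⟨treeOf D, perfTree_treeOf hD hDne, treeOf_subset hDP, ?_⟩
    intro t
    rw [body_treeOf_eq hD.closed]
    have hsub : ((fun x => cAdd x t) '' D) ∩ X ⊆ X ∩ Tr (cAdd t u) B := by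
      rintro x' ⟨⟨d, hd, rfl⟩, hx'X⟩
      refine ⟨hx'X, ?_⟩
      show cAdd (cAdd d t) (cAdd t u) ∈ B
      rw [cAdd_assoc, cAdd_cancel_left]
      exact hDT hd
    exact lt_of_le_of_lt (Cardinal.mk_le_mk_of_subset hsub) (hfat B hB (cAdd t u))

end S9
end

theorem stmt9 (X : Set Cantor) (hX : #X = Cardinal.continuum) :
    ∃ X' ⊆ X, #X' = Cardinal.continuum ∧
      ∀ p, PerfTree p → ∃ q, PerfTree q ∧ q ⊆ p ∧
        ∀ t : Cantor, #((((fun x => cAdd x t) '' body q) ∩ X') : Set Cantor) < Cardinal.continuum :=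
  S9.main_theorem X hX
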